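/- arXiv:2007.11521 — 3 statements merged into one kernel-verified Lean document; each statement's English description precedes it below -/
import Mathlib

section
/- Let R̂_emp be the empirical distribution of points (X₁,Y₁),…,(Xₙ,Yₙ) ∈ ℝ², and let R_* be a TP2 probability distribution on ℝ². Then a minimizer R̂ of the Kuiper distance ‖R − R̂_emp‖_K over all TP2 probability distributions R on ℝ² exists, and it satisfies ‖R̂ − R_*‖_K ≤ 2·‖R̂_emp − R_*‖_K. -/
open MeasureTheory Set
open scoped ENNReal BigOperators

/-- A probability distribution `R` on `ℝ²` is totally positive of order two. -/
def IsTP2 (R : Measure (ℝ × ℝ)) : Prop :=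
  ∀ A₁ A₂ B₁ B₂ : Set ℝ, MeasurableSet A₁ → MeasurableSet A₂ →
    MeasurableSet B₁ → MeasurableSet B₂ →
    (∀ a₁ ∈ A₁, ∀ a₂ ∈ A₂, a₁ < a₂) → (∀ b₁ ∈ B₁, ∀ b₂ ∈ B₂, b₁ < b₂) →
    R (A₂ ×ˢ B₁) * R (A₁ ×ˢ B₂) ≤ R (A₁ ×ˢ B₁) * R (A₂ ×ˢ B₂)

/-- The Kuiper distance between two finite measures on `ℝ²`: the supremum of
the absolute differences of the measures of half-open rectangles. -/
noncomputable def kuiperDist (μ ν : Measure (ℝ × ℝ)) : ℝ :=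
  sSup {d : ℝ | ∃ a₁ a₂ b₁ b₂ : ℝ, a₁ < a₂ ∧ b₁ < b₂ ∧
    d = |(μ (Ioc a₁ a₂ ×ˢ Ioc b₁ b₂)).toReal - (ν (Ioc a₁ a₂ ×ˢ Ioc b₁ b₂)).toReal|}

open scoped NNReal Classical

def KSet (μ ν : Measure (ℝ × ℝ)) : Set ℝ :=
  {d : ℝ | ∃ a₁ a₂ b₁ b₂ : ℝ, a₁ < a₂ ∧ b₁ < b₂ ∧
    d = |(μ (Ioc a₁ a₂ ×ˢ Ioc b₁ b₂)).toReal - (ν (Ioc a₁ a₂ ×ˢ Ioc b₁ b₂)).toReal|}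

lemma kuiperDist_def (μ ν : Measure (ℝ × ℝ)) : kuiperDist μ ν = sSup (KSet μ ν) := rfl

lemma KSet_nonempty (μ ν : Measure (ℝ × ℝ)) : (KSet μ ν).Nonempty :=
  ⟨_, 0, 1, 0, 1, zero_lt_one, zero_lt_one, rfl⟩

lemma KSet_bddAbove (μ ν : Measure (ℝ × ℝ)) [IsFiniteMeasure μ] [IsFiniteMeasure ν] :
    BddAbove (KSet μ ν) := by
  refine ⟨(μ univ).toReal + (ν univ).toReal, ?_⟩
  rintro d ⟨a₁, a₂, b₁, b₂, _, _, rfl⟩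
  refine (abs_sub _ _).trans ?_
  rw [abs_of_nonneg ENNReal.toReal_nonneg, abs_of_nonneg ENNReal.toReal_nonneg]
  have h1 : (μ (Ioc a₁ a₂ ×ˢ Ioc b₁ b₂)).toReal ≤ (μ univ).toReal :=
    ENNReal.toReal_mono (measure_ne_top _ _) (measure_mono (subset_univ _))
  have h2 : (ν (Ioc a₁ a₂ ×ˢ Ioc b₁ b₂)).toReal ≤ (ν univ).toReal :=
    ENNReal.toReal_mono (measure_ne_top _ _) (measure_mono (subset_univ _))
  linarith

lemma le_kuiperDist {μ ν : Measure (ℝ × ℝ)} [IsFiniteMeasure μ] [IsFiniteMeasure ν]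
    {d : ℝ} (hd : d ∈ KSet μ ν) : d ≤ kuiperDist μ ν :=
  le_csSup (KSet_bddAbove μ ν) hd

lemma kuiperDist_nonneg (μ ν : Measure (ℝ × ℝ)) [IsFiniteMeasure μ] [IsFiniteMeasure ν] :
    0 ≤ kuiperDist μ ν := by
  obtain ⟨d, hd⟩ := KSet_nonempty μ ν
  refine le_trans ?_ (le_kuiperDist hd)
  obtain ⟨a₁, a₂, b₁, b₂, _, _, rfl⟩ := hd
  exact abs_nonneg _

lemma kuiperDist_le {μ ν : Measure (ℝ × ℝ)} {c : ℝ} (h : ∀ d ∈ KSet μ ν, d ≤ c) :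
    kuiperDist μ ν ≤ c :=
  csSup_le (KSet_nonempty μ ν) h

lemma kuiperDist_comm (μ ν : Measure (ℝ × ℝ)) : kuiperDist μ ν = kuiperDist ν μ := by
  unfold kuiperDist
  congr 1
  ext d
  constructor <;> rintro ⟨a₁, a₂, b₁, b₂, h1, h2, rfl⟩ <;>
    exact ⟨a₁, a₂, b₁, b₂, h1, h2, abs_sub_comm _ _⟩

lemma kuiperDist_triangle (μ ν ρ : Measure (ℝ × ℝ)) [IsFiniteMeasure μ] [IsFiniteMeasure ν]
    [IsFiniteMeasure ρ] : kuiperDist μ ρ ≤ kuiperDist μ ν + kuiperDist ν ρ := by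
  refine kuiperDist_le ?_
  rintro d ⟨a₁, a₂, b₁, b₂, h1, h2, rfl⟩
  calc |(μ (Ioc a₁ a₂ ×ˢ Ioc b₁ b₂)).toReal - (ρ (Ioc a₁ a₂ ×ˢ Ioc b₁ b₂)).toReal|
      ≤ |(μ (Ioc a₁ a₂ ×ˢ Ioc b₁ b₂)).toReal - (ν (Ioc a₁ a₂ ×ˢ Ioc b₁ b₂)).toReal| +
        |(ν (Ioc a₁ a₂ ×ˢ Ioc b₁ b₂)).toReal - (ρ (Ioc a₁ a₂ ×ˢ Ioc b₁ b₂)).toReal| :=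
        abs_sub_le _ _ _
    _ ≤ kuiperDist μ ν + kuiperDist ν ρ := by
        gcongr
        · exact le_kuiperDist ⟨a₁, a₂, b₁, b₂, h1, h2, rfl⟩
        · exact le_kuiperDist ⟨a₁, a₂, b₁, b₂, h1, h2, rfl⟩

/-- A subset of `ℝ` that is either empty or an increasing limit of nonempty `Ioc` intervals. -/
def GoodSet (P : Set ℝ) : Prop :=
  P = ∅ ∨ ∃ A B : ℕ → ℝ, Antitone A ∧ Monotone B ∧ (∀ k, A k < B k) ∧
    (⋃ k, Ioc (A k) (B k)) = P

lemma goodSet_empty : GoodSet (∅ : Set ℝ) := Or.inl rfl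

lemma goodSet_Ioc (c d : ℝ) : GoodSet (Ioc c d) := by
  rcases lt_or_ge c d with h | h
  · exact Or.inr ⟨fun _ => c, fun _ => d, antitone_const, monotone_const, fun _ => h,
      by rw [iUnion_const]⟩
  · exact Or.inl (Ioc_eq_empty (not_lt.2 h))

lemma goodSet_Iic (d : ℝ) : GoodSet (Iic d) := by
  refine Or.inr ⟨fun k => d - 1 - k, fun _ => d, ?_, monotone_const, ?_, ?_⟩
  · intro i j hij; simp only; nlinarith [(show (i:ℝ) ≤ j by exact_mod_cast hij)]
  · intro k; have : (0:ℝ) ≤ k := Nat.cast_nonneg k; show d - 1 - (k:ℝ) < d; linarith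
  · ext x
    simp only [mem_iUnion, mem_Ioc, mem_Iic]
    constructor
    · rintro ⟨k, h1, h2⟩; exact h2
    · intro hx
      obtain ⟨k, hk⟩ := exists_nat_gt (d - 1 - x)
      exact ⟨k, by linarith, hx⟩

lemma goodSet_Ioi (c : ℝ) : GoodSet (Ioi c) := by
  refine Or.inr ⟨fun _ => c, fun k => c + 1 + k, antitone_const, ?_, ?_, ?_⟩
  · intro i j hij; simp only; nlinarith [(show (i:ℝ) ≤ j by exact_mod_cast hij)]
  · intro k; have : (0:ℝ) ≤ k := Nat.cast_nonneg k; show c < c + 1 + (k:ℝ); linarith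
  · ext x
    simp only [mem_iUnion, mem_Ioc, mem_Ioi]
    constructor
    · rintro ⟨k, h1, h2⟩; exact h1
    · intro hx
      obtain ⟨k, hk⟩ := exists_nat_gt (x - c - 1)
      exact ⟨k, hx, by linarith⟩

lemma goodSet_univ : GoodSet (univ : Set ℝ) := by
  refine Or.inr ⟨fun k => -(1:ℝ) - k, fun k => 1 + k, ?_, ?_, ?_, ?_⟩
  · intro i j hij; simp only; nlinarith [(show (i:ℝ) ≤ j by exact_mod_cast hij)]
  · intro i j hij; simp only; nlinarith [(show (i:ℝ) ≤ j by exact_mod_cast hij)]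
  · intro k; have : (0:ℝ) ≤ k := Nat.cast_nonneg k; show -(1:ℝ) - k < 1 + k; linarith
  · ext x
    simp only [mem_iUnion, mem_Ioc, mem_univ, iff_true]
    obtain ⟨k, hk⟩ := exists_nat_gt |x|
    have h1 := abs_lt.1 hk
    exact ⟨k, by linarith [h1.1], by linarith [h1.2]⟩

/-- Core limit lemma: products of good sets have measure-difference within Kuiper distance. -/
lemma abs_le_kuiperDist_of_goodSet (μ ν : Measure (ℝ × ℝ)) [IsFiniteMeasure μ]
    [IsFiniteMeasure ν] {Px Py : Set ℝ} (hx : GoodSet Px) (hy : GoodSet Py) :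
    |(μ (Px ×ˢ Py)).toReal - (ν (Px ×ˢ Py)).toReal| ≤ kuiperDist μ ν := by
  rcases hx with rfl | ⟨Ax, Bx, hAx, hBx, hABx, hUx⟩
  · simp [kuiperDist_nonneg μ ν]
  rcases hy with rfl | ⟨Ay, By, hAy, hBy, hABy, hUy⟩
  · simp [kuiperDist_nonneg μ ν]
  set Q : ℕ → Set (ℝ × ℝ) := fun k => Ioc (Ax k) (Bx k) ×ˢ Ioc (Ay k) (By k) with hQ
  have hmono : Monotone Q := fun i j hij =>
    Set.prod_mono (Ioc_subset_Ioc (hAx hij) (hBx hij)) (Ioc_subset_Ioc (hAy hij) (hBy hij))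
  have hUnion : (⋃ k, Q k) = Px ×ˢ Py := by
    rw [hQ, iUnion_prod_of_monotone (fun i j hij => Ioc_subset_Ioc (hAx hij) (hBx hij))
      (fun i j hij => Ioc_subset_Ioc (hAy hij) (hBy hij)), hUx, hUy]
  have hμ : Filter.Tendsto (fun k => (μ (Q k)).toReal) Filter.atTop
      (nhds ((μ (Px ×ˢ Py)).toReal)) := by
    rw [← hUnion]
    exact (ENNReal.tendsto_toReal (by rw [← hUnion] at *; exact measure_ne_top μ _)).comp
      (tendsto_measure_iUnion_atTop hmono)
  have hν : Filter.Tendsto (fun k => (ν (Q k)).toReal) Filter.atTop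
      (nhds ((ν (Px ×ˢ Py)).toReal)) := by
    rw [← hUnion]
    exact (ENNReal.tendsto_toReal (by rw [← hUnion] at *; exact measure_ne_top ν _)).comp
      (tendsto_measure_iUnion_atTop hmono)
  have htend : Filter.Tendsto (fun k => |(μ (Q k)).toReal - (ν (Q k)).toReal|) Filter.atTop
      (nhds (|(μ (Px ×ˢ Py)).toReal - (ν (Px ×ˢ Py)).toReal|)) := (hμ.sub hν).abs
  refine le_of_tendsto htend (Filter.Eventually.of_forall fun k => ?_)
  exact le_kuiperDist ⟨Ax k, Bx k, Ay k, By k, hABx k, hABy k, rfl⟩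

/-- Snap a real number up to the finite set `s` (or to `s.max' + 1` if above everything). -/
noncomputable def snap (s : Finset ℝ) (hs : s.Nonempty) (x : ℝ) : ℝ :=
  if h : (s.filter (fun v => x ≤ v)).Nonempty then (s.filter (fun v => x ≤ v)).min' h
  else s.max' hs + 1

lemma snap_mem (s : Finset ℝ) (hs : s.Nonempty) (x : ℝ) :
    snap s hs x ∈ s ∨ snap s hs x = s.max' hs + 1 := by
  unfold snap
  split_ifs with h
  · exact Or.inl (Finset.mem_of_mem_filter _ (Finset.min'_mem _ h))
  · exact Or.inr rfl

lemma snap_fix {s : Finset ℝ} (hs : s.Nonempty) {v : ℝ} (hv : v ∈ s) : snap s hs v = v := by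
  have hne : (s.filter (fun u => v ≤ u)).Nonempty := ⟨v, Finset.mem_filter.2 ⟨hv, le_refl v⟩⟩
  unfold snap
  rw [dif_pos hne]
  have h1 : (s.filter (fun u => v ≤ u)).min' hne ≤ v :=
    Finset.min'_le _ _ (Finset.mem_filter.2 ⟨hv, le_refl v⟩)
  have h2 : v ≤ (s.filter (fun u => v ≤ u)).min' hne :=
    (Finset.mem_filter.1 (Finset.min'_mem _ hne)).2
  linarith

lemma snap_mono (s : Finset ℝ) (hs : s.Nonempty) : Monotone (snap s hs) := by
  intro x y hxy
  unfold snap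
  split_ifs with h1 h2 h2
  · refine Finset.min'_le _ _ ?_
    have := Finset.min'_mem _ h2
    rw [Finset.mem_filter] at this ⊢
    exact ⟨this.1, hxy.trans this.2⟩
  · have := Finset.min'_mem _ h1
    rw [Finset.mem_filter] at this
    have hle : (s.filter (fun v => x ≤ v)).min' h1 ≤ s.max' hs := Finset.le_max' _ _ this.1
    linarith
  · exfalso
    obtain ⟨v, hv⟩ := h2
    rw [Finset.mem_filter] at hv
    exact h1 ⟨v, Finset.mem_filter.2 ⟨hv.1, hxy.trans hv.2⟩⟩
  · exact le_refl _

lemma snap_ge_min (s : Finset ℝ) (hs : s.Nonempty) (x : ℝ) : s.min' hs ≤ snap s hs x := by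
  rcases snap_mem s hs x with h | h
  · exact Finset.min'_le _ _ h
  · rw [h]
    have := Finset.min'_le _ _ (Finset.max'_mem s hs)
    linarith

lemma snap_le_max (s : Finset ℝ) (hs : s.Nonempty) (x : ℝ) : snap s hs x ≤ s.max' hs + 1 := by
  rcases snap_mem s hs x with h | h
  · have := Finset.le_max' _ _ h; linarith
  · rw [h]

/-- The sublevel sets of `snap` are `∅`, `univ`, or `Iic`. -/
lemma snap_sublevel (s : Finset ℝ) (hs : s.Nonempty) (b : ℝ) :
    {x : ℝ | snap s hs x ≤ b} = ∅ ∨ {x : ℝ | snap s hs x ≤ b} = univ ∨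
      ∃ d : ℝ, {x : ℝ | snap s hs x ≤ b} = Iic d := by
  by_cases hbig : s.max' hs + 1 ≤ b
  · refine Or.inr (Or.inl ?_)
    ext x; simp only [mem_setOf_eq, mem_univ, iff_true]
    exact (snap_le_max s hs x).trans hbig
  by_cases hsmall : b < s.min' hs
  · refine Or.inl ?_
    ext x; simp only [mem_setOf_eq, mem_empty_iff_false, iff_false, not_le]
    exact lt_of_lt_of_le hsmall (snap_ge_min s hs x)
  push_neg at hsmall
  refine Or.inr (Or.inr ?_)
  have hne : (s.filter (fun v => v ≤ b)).Nonempty :=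
    ⟨s.min' hs, Finset.mem_filter.2 ⟨Finset.min'_mem s hs, hsmall⟩⟩
  set d := (s.filter (fun v => v ≤ b)).max' hne with hd
  have hdmem := Finset.max'_mem _ hne
  rw [Finset.mem_filter] at hdmem
  refine ⟨d, ?_⟩
  ext x
  simp only [mem_setOf_eq, mem_Iic]
  constructor
  · intro hx
    by_contra hdx
    push_neg at hdx
    rcases snap_mem s hs x with h | h
    · -- snap x ∈ s, snap x ≥ x > d, snap x ≤ b, so snap x ∈ filter, so ≤ d, contra
      have hxle : x ≤ snap s hs x := by
        unfold snap at h ⊢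
        split_ifs at h ⊢ with hne2
        · exact (Finset.mem_filter.1 (Finset.min'_mem _ hne2)).2
        · exfalso
          have := Finset.le_max' s _ h
          linarith
      have hmemf : snap s hs x ∈ s.filter (fun v => v ≤ b) := Finset.mem_filter.2 ⟨h, hx⟩
      have : snap s hs x ≤ d := Finset.le_max' _ _ hmemf
      linarith
    · rw [h] at hx; linarith
  · intro hx
    have h1 : snap s hs x ≤ snap s hs d := snap_mono s hs hx
    rw [snap_fix hs hdmem.1] at h1
    exact h1.trans hdmem.2

/-- Preimage of an `Ioc` under `snap` is a good set. -/
lemma goodSet_snap_preimage (s : Finset ℝ) (hs : s.Nonempty) (a b : ℝ) :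
    GoodSet (snap s hs ⁻¹' Ioc a b) := by
  have hpre : snap s hs ⁻¹' Ioc a b =
      {x : ℝ | snap s hs x ≤ b} ∩ {x : ℝ | snap s hs x ≤ a}ᶜ := by
    ext x
    simp only [mem_preimage, mem_Ioc, mem_inter_iff, mem_setOf_eq, mem_compl_iff, not_le]
    tauto
  rcases snap_sublevel s hs b with hb | hb | ⟨d, hb⟩ <;>
    rcases snap_sublevel s hs a with ha | ha | ⟨c, ha⟩ <;>
      rw [hpre, hb, ha]
  · rw [empty_inter]; exact goodSet_empty
  · rw [empty_inter]; exact goodSet_empty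
  · rw [empty_inter]; exact goodSet_empty
  · rw [compl_empty, univ_inter]; exact goodSet_univ
  · rw [compl_univ, inter_empty]; exact goodSet_empty
  · rw [compl_Iic, univ_inter]; exact goodSet_Ioi c
  · rw [compl_empty, inter_univ]; exact goodSet_Iic d
  · rw [compl_univ, inter_empty]; exact goodSet_empty
  · rw [compl_Iic, Iic_inter_Ioi]; exact goodSet_Ioc c d


/-- TP2 is preserved by coordinatewise monotone pushforward. -/
lemma isTP2_map {R : Measure (ℝ × ℝ)} (hR : IsTP2 R) {f g : ℝ → ℝ}
    (hf : Monotone f) (hg : Monotone g) :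
    IsTP2 (Measure.map (fun q => (f q.1, g q.2)) R) := by
  have hmeas : Measurable (fun q : ℝ × ℝ => (f q.1, g q.2)) :=
    (hf.measurable.comp measurable_fst).prodMk (hg.measurable.comp measurable_snd)
  intro A₁ A₂ B₁ B₂ hA₁ hA₂ hB₁ hB₂ hordA hordB
  have hpre : ∀ (A B : Set ℝ), (fun q : ℝ × ℝ => (f q.1, g q.2)) ⁻¹' (A ×ˢ B) =
      (f ⁻¹' A) ×ˢ (g ⁻¹' B) := fun A B => rfl
  rw [Measure.map_apply hmeas (hA₂.prod hB₁), Measure.map_apply hmeas (hA₁.prod hB₂),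
    Measure.map_apply hmeas (hA₁.prod hB₁), Measure.map_apply hmeas (hA₂.prod hB₂),
    hpre, hpre, hpre, hpre]
  refine hR _ _ _ _ (hf.measurable hA₁) (hf.measurable hA₂) (hg.measurable hB₁)
    (hg.measurable hB₂) ?_ ?_
  · intro a₁ h₁ a₂ h₂
    by_contra hcon
    push_neg at hcon
    exact absurd (hf hcon) (not_le.2 (hordA _ h₁ _ h₂))
  · intro b₁ h₁ b₂ h₂
    by_contra hcon
    push_neg at hcon
    exact absurd (hg hcon) (not_le.2 (hordB _ h₁ _ h₂))

/-- A Dirac measure is TP2. -/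
lemma isTP2_dirac (p : ℝ × ℝ) : IsTP2 (Measure.dirac p) := by
  intro A₁ A₂ B₁ B₂ hA₁ hA₂ hB₁ hB₂ hordA hordB
  have : Measure.dirac p (A₂ ×ˢ B₁) * Measure.dirac p (A₁ ×ˢ B₂) = 0 := by
    rw [Measure.dirac_apply' _ (hA₂.prod hB₁), Measure.dirac_apply' _ (hA₁.prod hB₂)]
    by_cases h1 : p ∈ A₂ ×ˢ B₁
    · by_cases h2 : p ∈ A₁ ×ˢ B₂
      · exact absurd (hordA _ h2.1 _ h1.1) (lt_irrefl _)
      · rw [indicator_of_notMem h2]; ring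
    · rw [indicator_of_notMem h1]; ring
  rw [this]
  exact zero_le

/-! ### Finitely supported measures from weights -/

noncomputable def Phi (F : Finset (ℝ × ℝ)) (w : ℝ × ℝ → ℝ≥0) : Measure (ℝ × ℝ) :=
  ∑ p ∈ F, (w p : ℝ≥0∞) • Measure.dirac p

lemma Phi_apply (F : Finset (ℝ × ℝ)) (w : ℝ × ℝ → ℝ≥0) {E : Set (ℝ × ℝ)}
    (hE : MeasurableSet E) :
    Phi F w E = ∑ p ∈ F.filter (fun p => p ∈ E), (w p : ℝ≥0∞) := by
  rw [Phi, Measure.finset_sum_apply, Finset.sum_filter]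
  refine Finset.sum_congr rfl fun p _ => ?_
  rw [Measure.smul_apply, smul_eq_mul, Measure.dirac_apply' _ hE]
  by_cases h : p ∈ E <;> simp [h]

lemma Phi_apply_coe (F : Finset (ℝ × ℝ)) (w : ℝ × ℝ → ℝ≥0) {E : Set (ℝ × ℝ)}
    (hE : MeasurableSet E) :
    Phi F w E = ((∑ p ∈ F.filter (fun p => p ∈ E), w p : ℝ≥0) : ℝ≥0∞) := by
  rw [Phi_apply F w hE, ENNReal.coe_finset_sum]

lemma Phi_toReal (F : Finset (ℝ × ℝ)) (w : ℝ × ℝ → ℝ≥0) {E : Set (ℝ × ℝ)}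
    (hE : MeasurableSet E) :
    (Phi F w E).toReal = ∑ p ∈ F.filter (fun p => p ∈ E), (w p : ℝ) := by
  rw [Phi_apply_coe F w hE, ENNReal.coe_toReal, NNReal.coe_sum]

lemma isProbabilityMeasure_Phi {F : Finset (ℝ × ℝ)} {w : ℝ × ℝ → ℝ≥0}
    (hw : ∑ p ∈ F, w p = 1) : IsProbabilityMeasure (Phi F w) := by
  constructor
  rw [Phi_apply_coe F w MeasurableSet.univ]
  simp only [mem_univ, Finset.filter_true]
  rw [hw, ENNReal.coe_one]

instance Phi_finite (F : Finset (ℝ × ℝ)) (w : ℝ × ℝ → ℝ≥0) : IsFiniteMeasure (Phi F w) := by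
  constructor
  rw [Phi_apply_coe F w MeasurableSet.univ]
  exact ENNReal.coe_lt_top

/-- A finite measure vanishing outside a finite set is a weighted sum of Diracs. -/
lemma eq_Phi_of_null_compl (μ : Measure (ℝ × ℝ)) [IsFiniteMeasure μ] (F : Finset (ℝ × ℝ))
    (h : μ ((↑F : Set (ℝ × ℝ))ᶜ) = 0) :
    μ = Phi F (fun p => (μ {p}).toNNReal) := by
  ext E hE
  rw [Phi_apply _ _ hE]
  have hdiff : μ (E \ ↑F) = 0 := measure_mono_null (diff_subset_compl E ↑F) h
  have hF : MeasurableSet (↑F : Set (ℝ × ℝ)) := F.measurableSet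
  have h1 : μ E = μ (E ∩ ↑F) := by
    rw [← measure_inter_add_diff E hF, hdiff, add_zero]
  have h2 : E ∩ ↑F = ⋃ p ∈ F.filter (fun p => p ∈ E), ({p} : Set (ℝ × ℝ)) := by
    ext q
    simp only [mem_inter_iff, Finset.coe_filter, mem_iUnion, mem_singleton_iff,
      Finset.mem_filter, Finset.mem_coe, exists_prop]
    constructor
    · rintro ⟨hqE, hqF⟩; exact ⟨q, ⟨hqF, hqE⟩, rfl⟩
    · rintro ⟨p, ⟨hpF, hpE⟩, rfl⟩; exact ⟨hpE, hpF⟩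
  rw [h1, h2, measure_biUnion_finset ?_ (fun p _ => measurableSet_singleton p)]
  · refine Finset.sum_congr rfl fun p _ => ?_
    rw [ENNReal.coe_toNNReal (measure_ne_top μ _)]
  · intro p _ q _ hpq
    simp [Function.onFun, hpq]

lemma sum_atoms_eq_one (μ : Measure (ℝ × ℝ)) [IsProbabilityMeasure μ] (F : Finset (ℝ × ℝ))
    (h : μ ((↑F : Set (ℝ × ℝ))ᶜ) = 0) :
    ∑ p ∈ F, (μ {p}).toNNReal = 1 := by
  have h1 : Phi F (fun p => (μ {p}).toNNReal) univ = 1 := by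
    rw [← eq_Phi_of_null_compl μ F h]; exact measure_univ
  rw [Phi_apply_coe _ _ MeasurableSet.univ] at h1
  simp only [mem_univ, Finset.filter_true] at h1
  exact_mod_cast h1

/-! ### Snapping rectangle endpoints down to a finite grid -/

noncomputable def flo (V : Finset ℝ) (hV : V.Nonempty) (a : ℝ) : ℝ :=
  if h : (V.filter (fun v => v ≤ a)).Nonempty then (V.filter (fun v => v ≤ a)).max' h
  else V.min' hV - 1

noncomputable def Ugrid (V : Finset ℝ) (hV : V.Nonempty) : Finset ℝ :=
  insert (V.min' hV - 1) V

lemma Ugrid_nonempty (V : Finset ℝ) (hV : V.Nonempty) : (Ugrid V hV).Nonempty :=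
  Finset.insert_nonempty _ _

lemma flo_mem_Ugrid (V : Finset ℝ) (hV : V.Nonempty) (a : ℝ) : flo V hV a ∈ Ugrid V hV := by
  unfold flo Ugrid
  split_ifs with h
  · exact Finset.mem_insert_of_mem (Finset.mem_of_mem_filter _ (Finset.max'_mem _ h))
  · exact Finset.mem_insert_self _ _

lemma flo_iff (V : Finset ℝ) (hV : V.Nonempty) (a : ℝ) {v : ℝ} (hv : v ∈ V) :
    v ≤ a ↔ v ≤ flo V hV a := by
  unfold flo
  split_ifs with h
  · constructor
    · intro hva
      exact Finset.le_max' (V.filter (fun u => u ≤ a)) v (Finset.mem_filter.2 ⟨hv, hva⟩)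
    · intro hle
      exact hle.trans (Finset.mem_filter.1 (Finset.max'_mem _ h)).2
  · constructor
    · intro hva
      exact absurd (⟨v, Finset.mem_filter.2 ⟨hv, hva⟩⟩ :
        (V.filter (fun u => u ≤ a)).Nonempty) h
    · intro hle
      exfalso
      have := Finset.min'_le V v hv
      linarith

lemma mem_Ioc_flo_iff (V : Finset ℝ) (hV : V.Nonempty) (a₁ a₂ : ℝ) {v : ℝ} (hv : v ∈ V) :
    v ∈ Ioc a₁ a₂ ↔ v ∈ Ioc (flo V hV a₁) (flo V hV a₂) := by
  simp only [mem_Ioc, ← not_le]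
  rw [flo_iff V hV a₁ hv, flo_iff V hV a₂ hv]

lemma Ioc_inter_empty_of_not_flo_lt (V : Finset ℝ) (hV : V.Nonempty) {a₁ a₂ : ℝ}
    (h : ¬ flo V hV a₁ < flo V hV a₂) {v : ℝ} (hv : v ∈ V) : v ∉ Ioc a₁ a₂ := by
  intro hmem
  rw [mem_Ioc_flo_iff V hV a₁ a₂ hv] at hmem
  exact h (lt_of_lt_of_le hmem.1 hmem.2)

/-! ### Support conditions -/

def SuppIn (μ : Measure (ℝ × ℝ)) (Vx Vy : Finset ℝ) : Prop :=
  μ {q : ℝ × ℝ | ¬ (q.1 ∈ Vx ∧ q.2 ∈ Vy)} = 0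

lemma measure_eq_of_diff_subset_null (μ : Measure (ℝ × ℝ)) {E E' S : Set (ℝ × ℝ)}
    (hS : μ S = 0) (h1 : E \ E' ⊆ S) (h2 : E' \ E ⊆ S) : μ E = μ E' := by
  refine le_antisymm ?_ ?_
  · calc μ E ≤ μ (E' ∪ S) := measure_mono fun x hx => by
          by_cases h : x ∈ E'
          · exact Or.inl h
          · exact Or.inr (h1 ⟨hx, h⟩)
      _ ≤ μ E' + μ S := measure_union_le _ _
      _ = μ E' := by rw [hS, add_zero]
  · calc μ E' ≤ μ (E ∪ S) := measure_mono fun x hx => by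
          by_cases h : x ∈ E
          · exact Or.inl h
          · exact Or.inr (h2 ⟨hx, h⟩)
      _ ≤ μ E + μ S := measure_union_le _ _
      _ = μ E := by rw [hS, add_zero]

lemma rect_zero_of_suppIn {μ : Measure (ℝ × ℝ)} {Vx Vy : Finset ℝ}
    (hμ : SuppIn μ Vx Vy) {a₁ a₂ b₁ b₂ : ℝ}
    (h : (∀ v ∈ Vx, v ∉ Ioc a₁ a₂) ∨ (∀ v ∈ Vy, v ∉ Ioc b₁ b₂)) :
    μ (Ioc a₁ a₂ ×ˢ Ioc b₁ b₂) = 0 := by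
  refine measure_mono_null ?_ hμ
  rintro ⟨x, y⟩ ⟨hx, hy⟩
  simp only [mem_setOf_eq, not_and]
  rcases h with h | h
  · intro hxV
    exact absurd hx (h x hxV)
  · intro _ hyV
    exact absurd hy (h y hyV)

lemma rect_snap_of_suppIn {μ : Measure (ℝ × ℝ)} {Vx Vy : Finset ℝ} (hVx : Vx.Nonempty)
    (hVy : Vy.Nonempty) (hμ : SuppIn μ Vx Vy) (a₁ a₂ b₁ b₂ : ℝ) :
    μ (Ioc a₁ a₂ ×ˢ Ioc b₁ b₂) =
      μ (Ioc (flo Vx hVx a₁) (flo Vx hVx a₂) ×ˢ Ioc (flo Vy hVy b₁) (flo Vy hVy b₂)) := by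
  refine measure_eq_of_diff_subset_null μ hμ ?_ ?_ <;>
  · rintro ⟨x, y⟩ ⟨⟨hx, hy⟩, hne⟩
    simp only [mem_setOf_eq, not_and]
    intro hxV hyV
    refine hne ⟨?_, ?_⟩
    · first
        | exact (mem_Ioc_flo_iff Vx hVx a₁ a₂ hxV).1 hx
        | exact (mem_Ioc_flo_iff Vx hVx a₁ a₂ hxV).2 hx
    · first
        | exact (mem_Ioc_flo_iff Vy hVy b₁ b₂ hyV).1 hy
        | exact (mem_Ioc_flo_iff Vy hVy b₁ b₂ hyV).2 hy

/-! ### The finite sup expression for the Kuiper distance -/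

noncomputable def gval (μ ν : Measure (ℝ × ℝ)) (c : (ℝ × ℝ) × (ℝ × ℝ)) : ℝ :=
  if c.1.1 < c.1.2 ∧ c.2.1 < c.2.2 then
    |(μ (Ioc c.1.1 c.1.2 ×ˢ Ioc c.2.1 c.2.2)).toReal -
      (ν (Ioc c.1.1 c.1.2 ×ˢ Ioc c.2.1 c.2.2)).toReal|
  else 0

lemma gval_nonneg (μ ν : Measure (ℝ × ℝ)) (c : (ℝ × ℝ) × (ℝ × ℝ)) : 0 ≤ gval μ ν c := by
  unfold gval
  split_ifs
  · exact abs_nonneg _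
  · exact le_refl 0

noncomputable def Cands (Vx Vy : Finset ℝ) (hVx : Vx.Nonempty) (hVy : Vy.Nonempty) :
    Finset ((ℝ × ℝ) × (ℝ × ℝ)) :=
  (Ugrid Vx hVx ×ˢ Ugrid Vx hVx) ×ˢ (Ugrid Vy hVy ×ˢ Ugrid Vy hVy)

lemma Cands_nonempty (Vx Vy : Finset ℝ) (hVx : Vx.Nonempty) (hVy : Vy.Nonempty) :
    (Cands Vx Vy hVx hVy).Nonempty :=
  Finset.Nonempty.product (Finset.Nonempty.product (Ugrid_nonempty _ _) (Ugrid_nonempty _ _))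
    (Finset.Nonempty.product (Ugrid_nonempty _ _) (Ugrid_nonempty _ _))

noncomputable def gfun (Vx Vy : Finset ℝ) (hVx : Vx.Nonempty) (hVy : Vy.Nonempty)
    (μ ν : Measure (ℝ × ℝ)) : ℝ :=
  (Cands Vx Vy hVx hVy).sup' (Cands_nonempty Vx Vy hVx hVy) (gval μ ν)

lemma gfun_nonneg (Vx Vy : Finset ℝ) (hVx : Vx.Nonempty) (hVy : Vy.Nonempty)
    (μ ν : Measure (ℝ × ℝ)) : 0 ≤ gfun Vx Vy hVx hVy μ ν := by
  obtain ⟨c, hc⟩ := Cands_nonempty Vx Vy hVx hVy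
  exact le_trans (gval_nonneg μ ν c) (Finset.le_sup' _ hc)

lemma kuiperDist_eq_gfun {Vx Vy : Finset ℝ} (hVx : Vx.Nonempty) (hVy : Vy.Nonempty)
    {μ ν : Measure (ℝ × ℝ)} [IsFiniteMeasure μ] [IsFiniteMeasure ν]
    (hμ : SuppIn μ Vx Vy) (hν : SuppIn ν Vx Vy) :
    kuiperDist μ ν = gfun Vx Vy hVx hVy μ ν := by
  refine le_antisymm ?_ ?_
  · refine kuiperDist_le ?_
    rintro d ⟨a₁, a₂, b₁, b₂, h1, h2, rfl⟩
    set u₁ := flo Vx hVx a₁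
    set u₂ := flo Vx hVx a₂
    set t₁ := flo Vy hVy b₁
    set t₂ := flo Vy hVy b₂
    by_cases hord : u₁ < u₂ ∧ t₁ < t₂
    · have hmem : ((u₁, u₂), (t₁, t₂)) ∈ Cands Vx Vy hVx hVy := by
        unfold Cands
        refine Finset.mem_product.2 ⟨Finset.mem_product.2 ⟨?_, ?_⟩, Finset.mem_product.2 ⟨?_, ?_⟩⟩ <;>
          exact flo_mem_Ugrid _ _ _
      have heq : |(μ (Ioc a₁ a₂ ×ˢ Ioc b₁ b₂)).toReal - (ν (Ioc a₁ a₂ ×ˢ Ioc b₁ b₂)).toReal| =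
          gval μ ν ((u₁, u₂), (t₁, t₂)) := by
        unfold gval
        rw [if_pos hord]
        simp only
        rw [← rect_snap_of_suppIn hVx hVy hμ a₁ a₂ b₁ b₂,
          ← rect_snap_of_suppIn hVx hVy hν a₁ a₂ b₁ b₂]
      rw [heq]
      exact Finset.le_sup' _ hmem
    · have hz : ∀ ρ : Measure (ℝ × ℝ), SuppIn ρ Vx Vy → ρ (Ioc a₁ a₂ ×ˢ Ioc b₁ b₂) = 0 := by
        intro ρ hρ
        rcases not_and_or.1 hord with h | h
        · exact rect_zero_of_suppIn hρ (Or.inl fun v hv =>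
            Ioc_inter_empty_of_not_flo_lt Vx hVx h hv)
        · exact rect_zero_of_suppIn hρ (Or.inr fun v hv =>
            Ioc_inter_empty_of_not_flo_lt Vy hVy h hv)
      rw [hz μ hμ, hz ν hν]
      simpa using gfun_nonneg Vx Vy hVx hVy μ ν
  · refine Finset.sup'_le _ _ ?_
    rintro ⟨⟨u₁, u₂⟩, t₁, t₂⟩ _
    unfold gval
    split_ifs with hord
    · exact le_kuiperDist ⟨u₁, u₂, t₁, t₂, hord.1, hord.2, rfl⟩
    · exact kuiperDist_nonneg μ ν

/-! ### Indicator versions of Phi evaluation -/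

lemma Phi_apply_ind (F : Finset (ℝ × ℝ)) (w : ℝ × ℝ → ℝ≥0) {E : Set (ℝ × ℝ)}
    (hE : MeasurableSet E) :
    Phi F w E = ((∑ p ∈ F, E.indicator (fun _ => w p) p : ℝ≥0) : ℝ≥0∞) := by
  rw [Phi_apply_coe F w hE]
  congr 1
  rw [Finset.sum_filter]
  exact Finset.sum_congr rfl fun p _ => by by_cases hp : p ∈ E <;> simp [hp]

lemma Phi_toReal_ind (F : Finset (ℝ × ℝ)) (w : ℝ × ℝ → ℝ≥0) {E : Set (ℝ × ℝ)}
    (hE : MeasurableSet E) :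
    (Phi F w E).toReal = ∑ p ∈ F, E.indicator (fun _ => ((w p : ℝ))) p := by
  rw [Phi_apply_ind F w hE, ENNReal.coe_toReal, NNReal.coe_sum]
  exact Finset.sum_congr rfl fun p _ => by by_cases hp : p ∈ E <;> simp [hp]

/-! ### Continuity of gfun in the weights -/

lemma continuous_finset_sup' {ι X : Type*} [TopologicalSpace X] {s : Finset ι}
    (hs : s.Nonempty) {f : ι → X → ℝ} (hf : ∀ i, Continuous (f i)) :
    Continuous fun x => s.sup' hs fun i => f i x := by
  induction hs using Finset.Nonempty.cons_induction with
  | singleton a => simpa using hf a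
  | cons a t ha ht ih =>
    have : (fun x => (Finset.cons a t ha).sup' (Finset.cons_nonempty ha) fun i => f i x) =
        fun x => (f a x) ⊔ (t.sup' ht fun i => f i x) := by
      funext x
      exact Finset.sup'_cons ht (fun i => f i x)
    rw [this]
    exact (hf a).max ih

lemma continuous_Phi_rect (F : Finset (ℝ × ℝ)) {E : Set (ℝ × ℝ)} (hE : MeasurableSet E) :
    Continuous fun w : ℝ × ℝ → ℝ≥0 => (Phi F w E).toReal := by
  have : (fun w : ℝ × ℝ → ℝ≥0 => (Phi F w E).toReal) =
      fun w => ∑ p ∈ F, E.indicator (fun _ => ((w p : ℝ))) p := by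
    funext w
    exact Phi_toReal_ind F w hE
  rw [this]
  refine continuous_finset_sum _ fun p _ => ?_
  by_cases hp : p ∈ E
  · simp only [indicator_of_mem hp]
    exact NNReal.continuous_coe.comp (continuous_apply p)
  · simp only [indicator_of_notMem hp]
    exact continuous_const

lemma continuous_gfun (Vx Vy : Finset ℝ) (hVx : Vx.Nonempty) (hVy : Vy.Nonempty)
    (F : Finset (ℝ × ℝ)) (ν : Measure (ℝ × ℝ)) :
    Continuous fun w : ℝ × ℝ → ℝ≥0 => gfun Vx Vy hVx hVy (Phi F w) ν := by
  unfold gfun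
  refine continuous_finset_sup' _ fun c => ?_
  unfold gval
  split_ifs with h
  · exact ((continuous_Phi_rect F (measurableSet_Ioc.prod measurableSet_Ioc)).sub
      continuous_const).abs
  · exact continuous_const

/-! ### The feasible set of weights -/

def Wset (F : Finset (ℝ × ℝ)) : Set (ℝ × ℝ → ℝ≥0) :=
  {w | (∀ p ∉ F, w p = 0) ∧ (∑ p ∈ F, w p = 1) ∧ IsTP2 (Phi F w)}

lemma isClosed_Wset (F : Finset (ℝ × ℝ)) : IsClosed (Wset F) := by
  have h1 : IsClosed {w : ℝ × ℝ → ℝ≥0 | ∀ p ∉ F, w p = 0} := by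
    have : {w : ℝ × ℝ → ℝ≥0 | ∀ p ∉ F, w p = 0} =
        ⋂ p : ℝ × ℝ, {w : ℝ × ℝ → ℝ≥0 | p ∉ F → w p = 0} := by
      ext w; simp only [mem_setOf_eq, mem_iInter]
    rw [this]
    refine isClosed_iInter fun p => ?_
    by_cases hp : p ∈ F
    · have : {w : ℝ × ℝ → ℝ≥0 | p ∉ F → w p = 0} = univ := by
        ext w; simp [hp]
      rw [this]; exact isClosed_univ
    · have : {w : ℝ × ℝ → ℝ≥0 | p ∉ F → w p = 0} = {w | w p = 0} := by
        ext w; simp [hp]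
      rw [this]
      exact isClosed_eq (continuous_apply p) continuous_const
  have h2 : IsClosed {w : ℝ × ℝ → ℝ≥0 | ∑ p ∈ F, w p = 1} :=
    isClosed_eq (continuous_finset_sum _ fun p _ => continuous_apply p) continuous_const
  have h3 : IsClosed {w : ℝ × ℝ → ℝ≥0 | IsTP2 (Phi F w)} := by
    have hrw : {w : ℝ × ℝ → ℝ≥0 | IsTP2 (Phi F w)} =
        ⋂ (A₁ : Set ℝ), ⋂ (A₂ : Set ℝ), ⋂ (B₁ : Set ℝ), ⋂ (B₂ : Set ℝ),
          {w : ℝ × ℝ → ℝ≥0 | MeasurableSet A₁ → MeasurableSet A₂ →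
            MeasurableSet B₁ → MeasurableSet B₂ →
            (∀ a₁ ∈ A₁, ∀ a₂ ∈ A₂, a₁ < a₂) → (∀ b₁ ∈ B₁, ∀ b₂ ∈ B₂, b₁ < b₂) →
            Phi F w (A₂ ×ˢ B₁) * Phi F w (A₁ ×ˢ B₂) ≤
              Phi F w (A₁ ×ˢ B₁) * Phi F w (A₂ ×ˢ B₂)} := by
      ext w
      simp only [mem_setOf_eq, mem_iInter]
      exact Iff.rfl
    rw [hrw]
    refine isClosed_iInter fun A₁ => isClosed_iInter fun A₂ =>
      isClosed_iInter fun B₁ => isClosed_iInter fun B₂ => ?_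
    by_cases H : MeasurableSet A₁ ∧ MeasurableSet A₂ ∧ MeasurableSet B₁ ∧ MeasurableSet B₂ ∧
        (∀ a₁ ∈ A₁, ∀ a₂ ∈ A₂, a₁ < a₂) ∧ (∀ b₁ ∈ B₁, ∀ b₂ ∈ B₂, b₁ < b₂)
    · obtain ⟨hA₁, hA₂, hB₁, hB₂, hoA, hoB⟩ := H
      have key : ∀ (A B : Set ℝ), MeasurableSet A → MeasurableSet B → ∀ w : ℝ × ℝ → ℝ≥0,
          Phi F w (A ×ˢ B) = ((∑ p ∈ F, (A ×ˢ B).indicator (fun _ => w p) p : ℝ≥0) : ℝ≥0∞) :=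
        fun A B hA hB w => Phi_apply_ind F w (hA.prod hB)
      have hset : {w : ℝ × ℝ → ℝ≥0 | MeasurableSet A₁ → MeasurableSet A₂ →
            MeasurableSet B₁ → MeasurableSet B₂ →
            (∀ a₁ ∈ A₁, ∀ a₂ ∈ A₂, a₁ < a₂) → (∀ b₁ ∈ B₁, ∀ b₂ ∈ B₂, b₁ < b₂) →
            Phi F w (A₂ ×ˢ B₁) * Phi F w (A₁ ×ˢ B₂) ≤
              Phi F w (A₁ ×ˢ B₁) * Phi F w (A₂ ×ˢ B₂)} =
          {w : ℝ × ℝ → ℝ≥0 |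
            (∑ p ∈ F, (A₂ ×ˢ B₁).indicator (fun _ => w p) p) *
              (∑ p ∈ F, (A₁ ×ˢ B₂).indicator (fun _ => w p) p) ≤
            (∑ p ∈ F, (A₁ ×ˢ B₁).indicator (fun _ => w p) p) *
              (∑ p ∈ F, (A₂ ×ˢ B₂).indicator (fun _ => w p) p)} := by
        ext w
        simp only [mem_setOf_eq]
        constructor
        · intro h
          have := h hA₁ hA₂ hB₁ hB₂ hoA hoB
          rw [key A₂ B₁ hA₂ hB₁, key A₁ B₂ hA₁ hB₂, key A₁ B₁ hA₁ hB₁, key A₂ B₂ hA₂ hB₂,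
            ← ENNReal.coe_mul, ← ENNReal.coe_mul, ENNReal.coe_le_coe] at this
          exact this
        · intro h _ _ _ _ _ _
          rw [key A₂ B₁ hA₂ hB₁, key A₁ B₂ hA₁ hB₂, key A₁ B₁ hA₁ hB₁, key A₂ B₂ hA₂ hB₂,
            ← ENNReal.coe_mul, ← ENNReal.coe_mul, ENNReal.coe_le_coe]
          exact h
      rw [hset]
      have hcont : ∀ (A B : Set ℝ), Continuous fun w : ℝ × ℝ → ℝ≥0 =>
          ∑ p ∈ F, (A ×ˢ B).indicator (fun _ => w p) p := by
        intro A B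
        refine continuous_finset_sum _ fun p _ => ?_
        by_cases hp : p ∈ A ×ˢ B
        · simp only [indicator_of_mem hp]
          exact continuous_apply p
        · simp only [indicator_of_notMem hp]
          exact continuous_const
      exact isClosed_le (Continuous.mul (hcont A₂ B₁) (hcont A₁ B₂))
        (Continuous.mul (hcont A₁ B₁) (hcont A₂ B₂))
    · have : {w : ℝ × ℝ → ℝ≥0 | MeasurableSet A₁ → MeasurableSet A₂ →
            MeasurableSet B₁ → MeasurableSet B₂ →
            (∀ a₁ ∈ A₁, ∀ a₂ ∈ A₂, a₁ < a₂) → (∀ b₁ ∈ B₁, ∀ b₂ ∈ B₂, b₁ < b₂) →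
            Phi F w (A₂ ×ˢ B₁) * Phi F w (A₁ ×ˢ B₂) ≤
              Phi F w (A₁ ×ˢ B₁) * Phi F w (A₂ ×ˢ B₂)} = univ := by
        ext w
        simp only [mem_setOf_eq, mem_univ, iff_true]
        intro h1 h2 h3 h4 h5 h6
        exact absurd ⟨h1, h2, h3, h4, h5, h6⟩ H
      rw [this]
      exact isClosed_univ
  have : Wset F = {w : ℝ × ℝ → ℝ≥0 | ∀ p ∉ F, w p = 0} ∩
      ({w : ℝ × ℝ → ℝ≥0 | ∑ p ∈ F, w p = 1} ∩ {w : ℝ × ℝ → ℝ≥0 | IsTP2 (Phi F w)}) := by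
    rfl
  rw [this]
  exact h1.inter (h2.inter h3)

lemma isCompact_Wset (F : Finset (ℝ × ℝ)) : IsCompact (Wset F) := by
  refine IsCompact.of_isClosed_subset
    (isCompact_univ_pi (fun _ : ℝ × ℝ => isCompact_Icc (a := (0:ℝ≥0)) (b := 1)))
    (isClosed_Wset F) ?_
  intro w hw
  rw [mem_univ_pi]
  intro p
  rw [mem_Icc]
  refine ⟨zero_le, ?_⟩
  by_cases hp : p ∈ F
  · calc w p ≤ ∑ q ∈ F, w q := Finset.single_le_sum (fun q _ => zero_le) hp
      _ = 1 := hw.2.1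
  · rw [hw.1 p hp]
    exact zero_le_one

lemma Wset_nonempty (F : Finset (ℝ × ℝ)) (hF : F.Nonempty) : (Wset F).Nonempty := by
  obtain ⟨p₀, hp₀⟩ := hF
  refine ⟨fun p => if p = p₀ then 1 else 0, ?_, ?_, ?_⟩
  · intro p hp
    show (if p = p₀ then (1:ℝ≥0) else 0) = 0
    rw [if_neg]
    rintro rfl
    exact hp hp₀
  · rw [Finset.sum_ite_eq' F p₀ (fun _ => (1:ℝ≥0)), if_pos hp₀]
  · have : Phi F (fun p => if p = p₀ then 1 else 0) = Measure.dirac p₀ := by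
      ext E hE
      rw [Phi_apply _ _ hE, Measure.dirac_apply' _ hE]
      have hcoe : ∀ p : ℝ × ℝ, (((if p = p₀ then 1 else 0 : ℝ≥0)) : ℝ≥0∞) =
          if p = p₀ then (1:ℝ≥0∞) else 0 := by
        intro p; split_ifs <;> simp
      simp only [hcoe]
      rw [Finset.sum_ite_eq' (F.filter (fun p => p ∈ E)) p₀ (fun _ => (1:ℝ≥0∞))]
      by_cases hmem : p₀ ∈ E
      · rw [if_pos (Finset.mem_filter.2 ⟨hp₀, hmem⟩), indicator_of_mem hmem]
        rfl
      · rw [if_neg (fun hc => hmem (Finset.mem_filter.1 hc).2), indicator_of_notMem hmem]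
    rw [this]
    exact isTP2_dirac p₀

/-! ### Support lemmas for Phi on a grid product -/

lemma suppIn_Phi (Vx Vy : Finset ℝ) (w : ℝ × ℝ → ℝ≥0) :
    SuppIn (Phi (Vx ×ˢ Vy) w) Vx Vy := by
  unfold SuppIn
  have hset : {q : ℝ × ℝ | ¬ (q.1 ∈ Vx ∧ q.2 ∈ Vy)} =
      ((↑Vx : Set ℝ) ×ˢ (↑Vy : Set ℝ))ᶜ := by
    ext q
    simp [Set.mem_prod]
  have hmeas : MeasurableSet {q : ℝ × ℝ | ¬ (q.1 ∈ Vx ∧ q.2 ∈ Vy)} := by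
    rw [hset]
    exact (Vx.measurableSet.prod Vy.measurableSet).compl
  rw [Phi_apply _ _ hmeas]
  have h0 : ∀ p ∈ (Vx ×ˢ Vy : Finset (ℝ × ℝ)),
      ¬ p ∈ {q : ℝ × ℝ | ¬ (q.1 ∈ Vx ∧ q.2 ∈ Vy)} := by
    intro p hp
    rw [Finset.mem_product] at hp
    simp only [mem_setOf_eq, not_not]
    exact hp
  rw [Finset.sum_filter]
  refine Finset.sum_eq_zero fun p hp => ?_
  rw [if_neg (h0 p hp)]

/-! ### The main theorem -/

/-- **Lemma (minimum Kuiper distance estimator).** A minimizer `R̂` of the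
Kuiper distance to the empirical distribution over all TP2 probability
distributions on `ℝ²` exists, and it satisfies
`‖R̂ − R_*‖_K ≤ 2 ‖R̂_emp − R_*‖_K` for any TP2 probability measure `R_*`. -/
theorem stmt14 (n : ℕ) (hn : 0 < n) (pts : Fin n → ℝ × ℝ)
    (Remp : Measure (ℝ × ℝ))
    (hRemp : Remp = (n : ℝ≥0∞)⁻¹ • ∑ i : Fin n, Measure.dirac (pts i))
    (Rstar : Measure (ℝ × ℝ)) [IsProbabilityMeasure Rstar] (hstar : IsTP2 Rstar) :
    ∃ Rhat : Measure (ℝ × ℝ), IsProbabilityMeasure Rhat ∧ IsTP2 Rhat ∧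
      (∀ R : Measure (ℝ × ℝ), IsProbabilityMeasure R → IsTP2 R →
        kuiperDist Rhat Remp ≤ kuiperDist R Remp) ∧
      kuiperDist Rhat Rstar ≤ 2 * kuiperDist Remp Rstar := by
  haveI : NeZero n := ⟨hn.ne'⟩
  -- data grids
  set xs : Finset ℝ := Finset.image (fun i => (pts i).1) Finset.univ with hxs_def
  set ys : Finset ℝ := Finset.image (fun i => (pts i).2) Finset.univ with hys_def
  have hxs : xs.Nonempty := ⟨(pts ⟨0, hn⟩).1, Finset.mem_image.2 ⟨⟨0, hn⟩, Finset.mem_univ _, rfl⟩⟩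
  have hys : ys.Nonempty := ⟨(pts ⟨0, hn⟩).2, Finset.mem_image.2 ⟨⟨0, hn⟩, Finset.mem_univ _, rfl⟩⟩
  set Vx : Finset ℝ := insert (xs.max' hxs + 1) xs with hVx_def
  set Vy : Finset ℝ := insert (ys.max' hys + 1) ys with hVy_def
  have hVx : Vx.Nonempty := Finset.insert_nonempty _ _
  have hVy : Vy.Nonempty := Finset.insert_nonempty _ _
  set F : Finset (ℝ × ℝ) := Vx ×ˢ Vy with hF_def
  have hF : F.Nonempty := Finset.Nonempty.product hVx hVy
  -- the snapping map
  set T : ℝ × ℝ → ℝ × ℝ := fun q => (snap xs hxs q.1, snap ys hys q.2) with hT_def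
  have hTmeas : Measurable T :=
    ((snap_mono xs hxs).measurable.comp measurable_fst).prodMk
      ((snap_mono ys hys).measurable.comp measurable_snd)
  have hTfix : ∀ i : Fin n, T (pts i) = pts i := by
    intro i
    have h1 : (pts i).1 ∈ xs := Finset.mem_image.2 ⟨i, Finset.mem_univ _, rfl⟩
    have h2 : (pts i).2 ∈ ys := Finset.mem_image.2 ⟨i, Finset.mem_univ _, rfl⟩
    show (snap xs hxs (pts i).1, snap ys hys (pts i).2) = pts i
    rw [snap_fix hxs h1, snap_fix hys h2]
  have hTrange : ∀ q : ℝ × ℝ, T q ∈ (↑F : Set (ℝ × ℝ)) := by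
    intro q
    have h1 : snap xs hxs q.1 ∈ Vx := by
      rcases snap_mem xs hxs q.1 with h | h
      · exact Finset.mem_insert_of_mem h
      · rw [h]; exact Finset.mem_insert_self _ _
    have h2 : snap ys hys q.2 ∈ Vy := by
      rcases snap_mem ys hys q.2 with h | h
      · exact Finset.mem_insert_of_mem h
      · rw [h]; exact Finset.mem_insert_self _ _
    rw [hF_def, Finset.coe_product]
    exact ⟨Finset.mem_coe.2 h1, Finset.mem_coe.2 h2⟩
  -- basic facts about the empirical measure
  have hRempApply : ∀ E : Set (ℝ × ℝ),
      Remp E = (n : ℝ≥0∞)⁻¹ * ∑ i : Fin n, Measure.dirac (pts i) E := by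
    intro E
    rw [hRemp, Measure.smul_apply, Measure.finset_sum_apply, smul_eq_mul]
  haveI hRempProb : IsProbabilityMeasure Remp := by
    constructor
    rw [hRempApply]
    simp only [measure_univ, Finset.sum_const, Finset.card_univ, Fintype.card_fin, nsmul_eq_mul,
      mul_one]
    exact ENNReal.inv_mul_cancel (by exact_mod_cast hn.ne') (ENNReal.natCast_ne_top n)
  have hRempZero : ∀ E : Set (ℝ × ℝ), MeasurableSet E → (∀ i : Fin n, pts i ∉ E) →
      Remp E = 0 := by
    intro E hE h
    rw [hRempApply]
    have : ∀ i : Fin n, Measure.dirac (pts i) E = 0 := by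
      intro i
      rw [Measure.dirac_apply' _ hE, indicator_of_notMem (h i)]
    rw [Finset.sum_congr rfl fun i _ => this i]
    simp
  have hRempT : ∀ E : Set (ℝ × ℝ), MeasurableSet E → Remp (T ⁻¹' E) = Remp E := by
    intro E hE
    rw [hRempApply, hRempApply]
    congr 1
    refine Finset.sum_congr rfl fun i _ => ?_
    rw [Measure.dirac_apply' _ (hTmeas hE), Measure.dirac_apply' _ hE]
    have : pts i ∈ T ⁻¹' E ↔ pts i ∈ E := by
      rw [mem_preimage, hTfix i]
    by_cases h : pts i ∈ E
    · rw [indicator_of_mem (this.2 h), indicator_of_mem h]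
    · rw [indicator_of_notMem (fun hc => h (this.1 hc)), indicator_of_notMem h]
  have hRempSupp : SuppIn Remp Vx Vy := by
    unfold SuppIn
    refine hRempZero _ ?_ ?_
    · have hset : {q : ℝ × ℝ | ¬ (q.1 ∈ Vx ∧ q.2 ∈ Vy)} =
          ((↑Vx : Set ℝ) ×ˢ (↑Vy : Set ℝ))ᶜ := by
        ext q; simp [Set.mem_prod]
      rw [hset]
      exact (Vx.measurableSet.prod Vy.measurableSet).compl
    · intro i
      simp only [mem_setOf_eq, not_not]
      have h1 : (pts i).1 ∈ xs := Finset.mem_image.2 ⟨i, Finset.mem_univ _, rfl⟩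
      have h2 : (pts i).2 ∈ ys := Finset.mem_image.2 ⟨i, Finset.mem_univ _, rfl⟩
      exact ⟨Finset.mem_insert_of_mem h1, Finset.mem_insert_of_mem h2⟩
  -- the comparison step: snapping does not increase the Kuiper distance
  have hStepA : ∀ R : Measure (ℝ × ℝ), IsProbabilityMeasure R →
      kuiperDist (Measure.map T R) Remp ≤ kuiperDist R Remp := by
    intro R hRprob
    refine kuiperDist_le ?_
    rintro d ⟨a₁, a₂, b₁, b₂, h1, h2, rfl⟩
    have hQmeas : MeasurableSet (Ioc a₁ a₂ ×ˢ Ioc b₁ b₂) :=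
      measurableSet_Ioc.prod measurableSet_Ioc
    rw [Measure.map_apply hTmeas hQmeas, ← hRempT _ hQmeas]
    have hpre : T ⁻¹' (Ioc a₁ a₂ ×ˢ Ioc b₁ b₂) =
        (snap xs hxs ⁻¹' Ioc a₁ a₂) ×ˢ (snap ys hys ⁻¹' Ioc b₁ b₂) := rfl
    rw [hpre]
    exact abs_le_kuiperDist_of_goodSet R Remp (goodSet_snap_preimage xs hxs a₁ a₂)
      (goodSet_snap_preimage ys hys b₁ b₂)
  -- minimize over the compact feasible set
  obtain ⟨wopt, hwopt, hminOn⟩ := (isCompact_Wset F).exists_isMinOn (Wset_nonempty F hF)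
    (continuous_gfun Vx Vy hVx hVy F Remp).continuousOn
  refine ⟨Phi F wopt, isProbabilityMeasure_Phi hwopt.2.1, hwopt.2.2, ?_, ?_⟩
  · -- minimality over all TP2 probability measures
    intro R hRprob hRtp2
    set R' : Measure (ℝ × ℝ) := Measure.map T R with hR'_def
    haveI hR'prob : IsProbabilityMeasure R' :=
      Measure.isProbabilityMeasure_map hTmeas.aemeasurable
    have hR'tp2 : IsTP2 R' := isTP2_map hRtp2 (snap_mono xs hxs) (snap_mono ys hys)
    have hR'null : R' ((↑F : Set (ℝ × ℝ))ᶜ) = 0 := by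
      rw [hR'_def, Measure.map_apply hTmeas F.measurableSet.compl]
      have : T ⁻¹' (↑F : Set (ℝ × ℝ))ᶜ = ∅ := by
        ext q
        simp only [mem_preimage, mem_compl_iff, mem_empty_iff_false, iff_false, not_not]
        exact hTrange q
      rw [this, measure_empty]
    set wR : ℝ × ℝ → ℝ≥0 := fun p => (R' {p}).toNNReal with hwR_def
    have hPhiR : R' = Phi F wR := eq_Phi_of_null_compl R' F hR'null
    have hwRmem : wR ∈ Wset F := by
      refine ⟨?_, ?_, ?_⟩
      · intro p hp
        have : R' {p} = 0 := measure_mono_null (by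
          intro q hq
          rw [mem_singleton_iff] at hq
          subst hq
          exact hp) hR'null
        rw [hwR_def]
        simp [this]
      · exact sum_atoms_eq_one R' F hR'null
      · rw [← hPhiR]
        exact hR'tp2
    calc kuiperDist (Phi F wopt) Remp
        = gfun Vx Vy hVx hVy (Phi F wopt) Remp :=
          kuiperDist_eq_gfun hVx hVy (suppIn_Phi Vx Vy wopt) hRempSupp
      _ ≤ gfun Vx Vy hVx hVy (Phi F wR) Remp := hminOn hwRmem
      _ = kuiperDist (Phi F wR) Remp :=
          (kuiperDist_eq_gfun hVx hVy (suppIn_Phi Vx Vy wR) hRempSupp).symm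
      _ = kuiperDist R' Remp := by rw [← hPhiR]
      _ ≤ kuiperDist R Remp := hStepA R hRprob
  · -- the factor-2 bound
    haveI : IsProbabilityMeasure (Phi F wopt) := isProbabilityMeasure_Phi hwopt.2.1
    have hmin2 : kuiperDist (Phi F wopt) Remp ≤ kuiperDist Rstar Remp := by
      -- reuse the minimality just proven, specialized to Rstar
      set R' : Measure (ℝ × ℝ) := Measure.map T Rstar with hR'_def
      haveI hR'prob : IsProbabilityMeasure R' :=
        Measure.isProbabilityMeasure_map hTmeas.aemeasurable
      have hR'tp2 : IsTP2 R' := isTP2_map hstar (snap_mono xs hxs) (snap_mono ys hys)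
      have hR'null : R' ((↑F : Set (ℝ × ℝ))ᶜ) = 0 := by
        rw [hR'_def, Measure.map_apply hTmeas F.measurableSet.compl]
        have : T ⁻¹' (↑F : Set (ℝ × ℝ))ᶜ = ∅ := by
          ext q
          simp only [mem_preimage, mem_compl_iff, mem_empty_iff_false, iff_false, not_not]
          exact hTrange q
        rw [this, measure_empty]
      set wR : ℝ × ℝ → ℝ≥0 := fun p => (R' {p}).toNNReal with hwR_def
      have hPhiR : R' = Phi F wR := eq_Phi_of_null_compl R' F hR'null
      have hwRmem : wR ∈ Wset F := by
        refine ⟨?_, ?_, ?_⟩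
        · intro p hp
          have : R' {p} = 0 := measure_mono_null (by
            intro q hq
            rw [mem_singleton_iff] at hq
            subst hq
            exact hp) hR'null
          rw [hwR_def]
          simp [this]
        · exact sum_atoms_eq_one R' F hR'null
        · rw [← hPhiR]
          exact hR'tp2
      calc kuiperDist (Phi F wopt) Remp
          = gfun Vx Vy hVx hVy (Phi F wopt) Remp :=
            kuiperDist_eq_gfun hVx hVy (suppIn_Phi Vx Vy wopt) hRempSupp
        _ ≤ gfun Vx Vy hVx hVy (Phi F wR) Remp := hminOn hwRmem
        _ = kuiperDist (Phi F wR) Remp :=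
            (kuiperDist_eq_gfun hVx hVy (suppIn_Phi Vx Vy wR) hRempSupp).symm
        _ = kuiperDist R' Remp := by rw [← hPhiR]
        _ ≤ kuiperDist Rstar Remp := hStepA Rstar inferInstance
    calc kuiperDist (Phi F wopt) Rstar
        ≤ kuiperDist (Phi F wopt) Remp + kuiperDist Remp Rstar :=
          kuiperDist_triangle _ _ _
      _ ≤ kuiperDist Rstar Remp + kuiperDist Remp Rstar := by linarith
      _ = 2 * kuiperDist Remp Rstar := by
          rw [kuiperDist_comm Rstar Remp]; ring
end

section
/- Let Q₀ and Q₁ be Borel probability measures on ℝ with Q₀ ≤lr Q₁, and for t ∈ [0,1] define the mixture Q_t := (1−t)·Q₀ + t·Q₁. Then Q_s ≤lr Q_t for all 0 ≤ s < t ≤ 1. -/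
open MeasureTheory Set
open scoped ENNReal

/-- `P` is smaller than `Q` in the likelihood ratio order. -/
def IsLR (P Q : Measure ℝ) : Prop :=
  ∀ A B : Set ℝ, MeasurableSet A → MeasurableSet B →
    (∀ a ∈ A, ∀ b ∈ B, a ≤ b) → P B * Q A ≤ P A * Q B

/-- **Lemma (linear interpolation preserves lr-order).** If `Q₀ ≤lr Q₁` and
`Q_t = (1−t) Q₀ + t Q₁`, then `Q_s ≤lr Q_t` whenever `0 ≤ s < t ≤ 1`. -/
theorem stmt16 (Q₀ Q₁ : Measure ℝ) [IsProbabilityMeasure Q₀] [IsProbabilityMeasure Q₁]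
    (h : IsLR Q₀ Q₁) (s t : ℝ) (hs : 0 ≤ s) (hst : s < t) (ht : t ≤ 1) :
    IsLR (ENNReal.ofReal (1 - s) • Q₀ + ENNReal.ofReal s • Q₁)
         (ENNReal.ofReal (1 - t) • Q₀ + ENNReal.ofReal t • Q₁) := by
  intro A B hA hB hAB
  have hX : Q₀ B * Q₁ A ≤ Q₀ A * Q₁ B := h A B hA hB hAB
  simp only [Measure.add_apply, Measure.smul_apply, smul_eq_mul]
  set a := ENNReal.ofReal (1 - s) with ha
  set b := ENNReal.ofReal s with hb
  set c := ENNReal.ofReal (1 - t) with hc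
  set d := ENNReal.ofReal t with hd
  set e := ENNReal.ofReal (t - s) with he
  have hs1 : (0:ℝ) ≤ 1 - s := by linarith
  have ht0 : (0:ℝ) ≤ t := by linarith
  have ht1 : (0:ℝ) ≤ 1 - t := by linarith
  have hts : (0:ℝ) ≤ t - s := by linarith
  have key : a * d = b * c + e := by
    rw [ha, hb, hc, hd, he, ← ENNReal.ofReal_mul hs1, ← ENNReal.ofReal_mul hs,
      ← ENNReal.ofReal_add (by positivity) hts, ENNReal.ofReal_eq_ofReal_iff
      (by positivity) (by positivity)]
    ring
  calc (a * Q₀ B + b * Q₁ B) * (c * Q₀ A + d * Q₁ A)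
      = a * c * (Q₀ A * Q₀ B) + (a * d * (Q₀ B * Q₁ A) + b * c * (Q₀ A * Q₁ B))
        + b * d * (Q₁ A * Q₁ B) := by ring
    _ = a * c * (Q₀ A * Q₀ B) + ((b * c + e) * (Q₀ B * Q₁ A) + b * c * (Q₀ A * Q₁ B))
        + b * d * (Q₁ A * Q₁ B) := by rw [key]
    _ = a * c * (Q₀ A * Q₀ B) + (b * c * (Q₀ B * Q₁ A) + b * c * (Q₀ A * Q₁ B)
        + e * (Q₀ B * Q₁ A)) + b * d * (Q₁ A * Q₁ B) := by ring
    _ ≤ a * c * (Q₀ A * Q₀ B) + (b * c * (Q₀ B * Q₁ A) + b * c * (Q₀ A * Q₁ B)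
        + e * (Q₀ A * Q₁ B)) + b * d * (Q₁ A * Q₁ B) := by gcongr
    _ = a * c * (Q₀ A * Q₀ B) + ((b * c + e) * (Q₀ A * Q₁ B) + b * c * (Q₀ B * Q₁ A))
        + b * d * (Q₁ A * Q₁ B) := by ring
    _ = a * c * (Q₀ A * Q₀ B) + (a * d * (Q₀ A * Q₁ B) + b * c * (Q₀ B * Q₁ A))
        + b * d * (Q₁ A * Q₁ B) := by rw [key]
    _ = (a * Q₀ A + b * Q₁ A) * (c * Q₀ B + d * Q₁ B) := by ring
end

section
/- Let f : ℝ^d → ℝ be strictly convex and differentiable, let Θ ⊆ ℝ^d be closed and convex, and assume the minimizer θ̂ of f over Θ exists. Fix θ₀ ∈ Θ and a nonsingular matrix A ∈ ℝ^{d×d}, define the quadratic approximation f₀(x) := f(θ₀) + ∇f(θ₀)ᵀ(x − θ₀) + (1/2)·‖A x − A θ₀‖², let θ_* be the unique minimizer of f₀ over Θ, and set δ₀ := ∇f(θ₀)ᵀ(θ₀ − θ_*). Then: θ_* = θ₀ if and only if θ₀ = θ̂; moreover δ₀/2 ≤ f₀(θ₀) − f₀(θ_*) ≤ δ₀; and f(θ₀)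 − f(θ̂) ≤ ∇f(θ₀)ᵀ(θ₀ − θ̂) ≤ max(2δ₀, √(2δ₀)·‖A θ̂ − A θ₀‖). In addition, if f is twice differentiable and there is c₀ > 0 with (d²/dt²) f((1−t)θ₀ + t θ_*) ≤ c₀·‖θ₀ − θ_*‖² for all t ∈ [0,1], then in case θ₀ ≠ θ̂, max_{t∈[0,1]} ( f(θ₀) − f((1−t)θ₀ + t θ_*) ) ≥ (1/2)·min( δ₀, δ₀²/(c₀·‖θ₀ − θ_*‖²) ). -/
open Set
open scoped RealInnerProductSpace Topology

section aux
variable {d : ℕ}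
local notation "E" => EuclideanSpace ℝ (Fin d)

lemma aux_pos (b e : ℝ) (h : ∀ t : ℝ, 0 < t → t ≤ 1 → 0 ≤ t * b + t ^ 2 * e) : 0 ≤ b := by
  by_contra hb
  push_neg at hb
  rcases le_or_gt e 0 with he | he
  · have := h 1 one_pos le_rfl; nlinarith
  · set t := min 1 (-b / (2 * e)) with ht
    have ht0 : 0 < t := lt_min one_pos (div_pos (by linarith) (by linarith))
    have ht1 : t ≤ 1 := min_le_left _ _
    have ht2 : t ≤ -b / (2 * e) := min_le_right _ _
    have ht2' : t * (2 * e) ≤ -b := (le_div_iff₀ (by linarith)).mp ht2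
    have := h t ht0 ht1
    nlinarith [mul_le_mul_of_nonneg_left ht2' ht0.le]

lemma aux_line (f : E → ℝ) (hdiff : Differentiable ℝ f) (x v : E) (t : ℝ) :
    HasDerivAt (fun u : ℝ => f (x + u • v)) ⟪gradient f (x + t • v), v⟫ t := by
  have hline : HasDerivAt (fun u : ℝ => x + u • v) v t := by
    simpa using ((hasDerivAt_id t).smul_const v).const_add x
  have hF := ((hdiff (x + t • v)).hasGradientAt).hasFDerivAt
  have := hF.comp_hasDerivAt t hline
  simpa [InnerProductSpace.toDual_apply_apply, Function.comp_def] using this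

lemma aux_grad_le (f : E → ℝ) (hconv : ConvexOn ℝ Set.univ f) (hdiff : Differentiable ℝ f)
    (x y : E) : f x + ⟪gradient f x, y - x⟫ ≤ f y := by
  have hd : HasDerivAt (fun u : ℝ => f (x + u • (y - x))) ⟪gradient f x, y - x⟫ 0 := by
    simpa using aux_line f hdiff x (y - x) 0
  have hten : Filter.Tendsto (slope (fun u : ℝ => f (x + u • (y - x))) 0) (𝓝[>] 0)
      (𝓝 ⟪gradient f x, y - x⟫) :=
    (hasDerivAt_iff_tendsto_slope.mp hd).mono_left
      (nhdsWithin_mono _ fun a ha => ne_of_gt ha)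
  have hev : ∀ᶠ t in 𝓝[>] (0:ℝ),
      slope (fun u : ℝ => f (x + u • (y - x))) 0 t ≤ f y - f x := by
    filter_upwards [Ioc_mem_nhdsGT_of_mem ⟨le_refl (0:ℝ), one_pos⟩] with t ht
    obtain ⟨ht0, ht1⟩ := ht
    have hmem := hconv.2 (mem_univ x) (mem_univ y) (by linarith : (0:ℝ) ≤ 1 - t) ht0.le
      (by ring)
    have hxy : x + t • (y - x) = (1 - t) • x + t • y := by module
    rw [slope_def_field]
    simp only [sub_zero, zero_smul, add_zero, hxy]
    rw [div_le_iff₀ ht0]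
    simp only [smul_eq_mul] at hmem
    nlinarith
  have := le_of_tendsto hten hev
  linarith

lemma aux_foc (f : E → ℝ) (hdiff : Differentiable ℝ f) {Θ : Set E} (hΘconv : Convex ℝ Θ)
    {x : E} (hx : x ∈ Θ) (hmin : ∀ θ ∈ Θ, f x ≤ f θ) {y : E} (hy : y ∈ Θ) :
    0 ≤ ⟪gradient f x, y - x⟫ := by
  have hd : HasDerivAt (fun u : ℝ => f (x + u • (y - x))) ⟪gradient f x, y - x⟫ 0 := by
    simpa using aux_line f hdiff x (y - x) 0
  have hten : Filter.Tendsto (slope (fun u : ℝ => f (x + u • (y - x))) 0) (𝓝[>] 0)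
      (𝓝 ⟪gradient f x, y - x⟫) :=
    (hasDerivAt_iff_tendsto_slope.mp hd).mono_left
      (nhdsWithin_mono _ fun a ha => ne_of_gt ha)
  have hev : ∀ᶠ t in 𝓝[>] (0:ℝ),
      0 ≤ slope (fun u : ℝ => f (x + u • (y - x))) 0 t := by
    filter_upwards [Ioc_mem_nhdsGT_of_mem ⟨le_refl (0:ℝ), one_pos⟩] with t ht
    obtain ⟨ht0, ht1⟩ := ht
    have hxy : x + t • (y - x) = (1 - t) • x + t • y := by module
    have hmem : x + t • (y - x) ∈ Θ := by
      rw [hxy]; exact hΘconv hx hy (by linarith) ht0.le (by ring)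
    have := hmin _ hmem
    rw [slope_def_field]
    simp only [sub_zero, zero_smul, add_zero]
    apply div_nonneg (by linarith) ht0.le
  exact ge_of_tendsto hten hev

end aux

set_option maxHeartbeats 2000000 in
/-- **Lemma (quadratic approximations in constrained convex minimization).**
Let `f` be strictly convex and differentiable on `ℝ^d`, `Θ` closed convex,
`θ̂` a minimizer of `f` over `Θ`, `θ₀ ∈ Θ`, `A` a nonsingular matrix, `f₀` the
quadratic approximation of `f` at `θ₀` with curvature `‖A·‖²`, `θ_*` the
minimizer of `f₀` over `Θ` and `δ₀ = ⟪∇f(θ₀), θ₀ − θ_*⟫`. Then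
`θ_* = θ₀ ⇔ θ₀ = θ̂`; `δ₀/2 ≤ f₀(θ₀) − f₀(θ_*) ≤ δ₀`;
`f(θ₀) − f(θ̂) ≤ ⟪∇f(θ₀), θ₀ − θ̂⟫ ≤ max(2δ₀, √(2δ₀)‖Aθ̂ − Aθ₀‖)`; and under a
second-order bound along the segment from `θ₀` to `θ_*`, a guaranteed descent
along that segment. -/
theorem stmt19 (d : ℕ) (f : EuclideanSpace ℝ (Fin d) → ℝ)
    (hconv : StrictConvexOn ℝ Set.univ f) (hdiff : Differentiable ℝ f)
    (Θ : Set (EuclideanSpace ℝ (Fin d))) (hclosed : IsClosed Θ) (hΘconv : Convex ℝ Θ)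
    (θhat : EuclideanSpace ℝ (Fin d)) (hθhatΘ : θhat ∈ Θ)
    (hθhatmin : ∀ θ ∈ Θ, f θhat ≤ f θ)
    (θ₀ : EuclideanSpace ℝ (Fin d)) (hθ₀ : θ₀ ∈ Θ)
    (A : Matrix (Fin d) (Fin d) ℝ) (hA : A.det ≠ 0)
    (f₀ : EuclideanSpace ℝ (Fin d) → ℝ)
    (hf₀ : ∀ x, f₀ x = f θ₀ + ⟪gradient f θ₀, x - θ₀⟫
      + (1 / 2) * ‖Matrix.toEuclideanLin A x - Matrix.toEuclideanLin A θ₀‖ ^ 2)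
    (θs : EuclideanSpace ℝ (Fin d)) (hθsΘ : θs ∈ Θ)
    (hθsmin : ∀ θ ∈ Θ, f₀ θs ≤ f₀ θ)
    (δ₀ : ℝ) (hδ₀ : δ₀ = ⟪gradient f θ₀, θ₀ - θs⟫) :
    ((θs = θ₀ ↔ θ₀ = θhat) ∧
      δ₀ / 2 ≤ f₀ θ₀ - f₀ θs ∧ f₀ θ₀ - f₀ θs ≤ δ₀ ∧
      f θ₀ - f θhat ≤ ⟪gradient f θ₀, θ₀ - θhat⟫ ∧
      ⟪gradient f θ₀, θ₀ - θhat⟫ ≤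
        max (2 * δ₀) (Real.sqrt (2 * δ₀) *
          ‖Matrix.toEuclideanLin A θhat - Matrix.toEuclideanLin A θ₀‖)) ∧
    (∀ c₀ : ℝ, 0 < c₀ → ContDiff ℝ 2 f →
      (∀ t ∈ Icc (0 : ℝ) 1,
        deriv (deriv (fun u : ℝ => f ((1 - u) • θ₀ + u • θs))) t ≤
          c₀ * ‖θ₀ - θs‖ ^ 2) →
      θ₀ ≠ θhat →
      ∃ t ∈ Icc (0 : ℝ) 1,
        (1 / 2) * min δ₀ (δ₀ ^ 2 / (c₀ * ‖θ₀ - θs‖ ^ 2)) ≤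
          f θ₀ - f ((1 - t) • θ₀ + t • θs)) := by
  set g := gradient f θ₀ with hg
  set L := Matrix.toEuclideanLin A with hL
  -- quadratic expansion of f₀
  have hQ : ∀ (a w : EuclideanSpace ℝ (Fin d)) (t : ℝ),
      f₀ (a + t • w) = f₀ a + t * (⟪g, w⟫ + ⟪L (a - θ₀), L w⟫) + t ^ 2 / 2 * ‖L w‖ ^ 2 := by
    intro a w t
    have h1 : L (a + t • w) - L θ₀ = L (a - θ₀) + t • L w := by
      rw [map_add, map_smul, map_sub]; abel
    rw [hf₀, hf₀, show a + t • w - θ₀ = (a - θ₀) + t • w by abel, h1,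
      show L a - L θ₀ = L (a - θ₀) from (map_sub L a θ₀).symm]
    rw [inner_add_right, real_inner_smul_right, norm_add_sq_real, real_inner_smul_right,
      norm_smul, Real.norm_eq_abs, mul_pow, sq_abs]
    ring
  -- injectivity of L
  have hLinj : ∀ v : EuclideanSpace ℝ (Fin d), L v = 0 → v = 0 := by
    intro v hv
    have h1 : A.mulVec (WithLp.equiv 2 (Fin d → ℝ) v) = 0 := by
      simpa [hL, Matrix.toEuclideanLin_apply] using congrArg (WithLp.equiv 2 (Fin d → ℝ)) hv
    have h2 := Matrix.eq_zero_of_mulVec_eq_zero hA h1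
    simpa using congrArg (WithLp.equiv 2 (Fin d → ℝ)).symm h2
  -- first-order condition at θs for f₀
  have hFOC : ∀ θ ∈ Θ, 0 ≤ ⟪g, θ - θs⟫ + ⟪L (θs - θ₀), L (θ - θs)⟫ := by
    intro θ hθ
    refine aux_pos _ (‖L (θ - θs)‖ ^ 2 / 2) fun t ht0 ht1 => ?_
    have hmem : θs + t • (θ - θs) ∈ Θ := by
      rw [show θs + t • (θ - θs) = (1 - t) • θs + t • θ by module]
      exact hΘconv hθsΘ hθ (by linarith) ht0.le (by ring)
    have := hθsmin _ hmem
    rw [hQ θs (θ - θs) t] at this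
    nlinarith
  have hK : ‖L (θs - θ₀)‖ ^ 2 ≤ δ₀ := by
    have h := hFOC θ₀ hθ₀
    have h2 : ⟪L (θs - θ₀), L (θ₀ - θs)⟫ = -‖L (θs - θ₀)‖ ^ 2 := by
      rw [show θ₀ - θs = -(θs - θ₀) by abel, map_neg, inner_neg_right,
        real_inner_self_eq_norm_sq]
    rw [hδ₀]
    have := h
    rw [h2] at this
    linarith
  have hδnn : 0 ≤ δ₀ := le_trans (by positivity) hK
  have hgap : f₀ θ₀ - f₀ θs = δ₀ - ‖L (θs - θ₀)‖ ^ 2 / 2 := by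
    have h := hQ θs (θ₀ - θs) 1
    rw [show θs + (1:ℝ) • (θ₀ - θs) = θ₀ by module] at h
    have h2 : ⟪L (θs - θ₀), L (θ₀ - θs)⟫ = -‖L (θs - θ₀)‖ ^ 2 := by
      rw [show θ₀ - θs = -(θs - θ₀) by abel, map_neg, inner_neg_right,
        real_inner_self_eq_norm_sq]
    have h3 : ‖L (θ₀ - θs)‖ = ‖L (θs - θ₀)‖ := by
      rw [show θ₀ - θs = -(θs - θ₀) by abel, map_neg, norm_neg]
    rw [h2, h3, ← hδ₀] at h
    linarith
  -- direction: θs = θ₀ → θ₀ = θhat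
  have hdir1 : θs = θ₀ → θ₀ = θhat := by
    intro h
    have hfoc' : ∀ θ ∈ Θ, 0 ≤ ⟪g, θ - θ₀⟫ := by
      intro θ hθ
      have := hFOC θ hθ
      rw [h] at this
      simpa using this
    have hmin0 : ∀ θ ∈ Θ, f θ₀ ≤ f θ := by
      intro θ hθ
      have h1 := aux_grad_le f hconv.convexOn hdiff θ₀ θ
      have h2 := hfoc' θ hθ
      rw [← hg] at h1
      linarith
    by_contra hne
    have hmemm : (1/2 : ℝ) • θ₀ + (1/2 : ℝ) • θhat ∈ Θ :=
      hΘconv hθ₀ hθhatΘ (by norm_num) (by norm_num) (by norm_num)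
    have hstrict := hconv.2 (mem_univ θ₀) (mem_univ θhat) hne
      (by norm_num : (0:ℝ) < 1/2) (by norm_num : (0:ℝ) < 1/2) (by norm_num)
    have h3 := hmin0 _ hmemm
    have h4 := hθhatmin θ₀ hθ₀
    simp only [smul_eq_mul] at hstrict
    linarith
  -- direction: θ₀ = θhat → θs = θ₀
  have hdir2 : θ₀ = θhat → θs = θ₀ := by
    intro h
    have hmin0 : ∀ θ ∈ Θ, f θ₀ ≤ f θ := by
      intro θ hθ; rw [h]; exact hθhatmin θ hθ
    have hfoc0 : 0 ≤ ⟪g, θs - θ₀⟫ := aux_foc f hdiff hΘconv hθ₀ hmin0 hθsΘ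
    have h1 := hθsmin θ₀ hθ₀
    have h2 : f₀ θ₀ = f θ₀ := by
      rw [hf₀]; simp
    have h3 : f₀ θs = f θ₀ + ⟪g, θs - θ₀⟫ + (1/2) * ‖L (θs - θ₀)‖ ^ 2 := by
      rw [hf₀, map_sub]
    have h4 : ‖L (θs - θ₀)‖ ^ 2 ≤ 0 := by
      rw [h2] at h1; rw [h3] at h1; linarith
    have h5 : L (θs - θ₀) = 0 := by
      have : ‖L (θs - θ₀)‖ = 0 := by nlinarith [norm_nonneg (L (θs - θ₀))]
      exact norm_eq_zero.mp this
    have := hLinj _ h5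
    exact sub_eq_zero.mp this
  -- segment bound toward θhat
  have hseg : ∀ t : ℝ, 0 ≤ t → t ≤ 1 →
      t * ⟪g, θ₀ - θhat⟫ ≤ δ₀ + t ^ 2 / 2 * ‖L (θhat - θ₀)‖ ^ 2 := by
    intro t ht0 ht1
    have hmem : θ₀ + t • (θhat - θ₀) ∈ Θ := by
      rw [show θ₀ + t • (θhat - θ₀) = (1 - t) • θ₀ + t • θhat by module]
      exact hΘconv hθ₀ hθhatΘ (by linarith) ht0 (by ring)
    have h1 := hθsmin _ hmem
    rw [hQ θ₀ (θhat - θ₀) t] at h1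
    have h2 : L (θ₀ - θ₀) = 0 := by rw [sub_self, map_zero]
    rw [h2] at h1
    simp only [inner_zero_left, add_zero] at h1
    have h3 : ⟪g, θhat - θ₀⟫ = -⟪g, θ₀ - θhat⟫ := by
      rw [show θhat - θ₀ = -(θ₀ - θhat) by abel, inner_neg_right]
    rw [h3] at h1
    nlinarith [norm_nonneg (L (θs - θ₀)), sq_nonneg (‖L (θs - θ₀)‖)]
  -- part 4
  have hpart4 : ⟪g, θ₀ - θhat⟫ ≤
      max (2 * δ₀) (Real.sqrt (2 * δ₀) * ‖L θhat - L θ₀‖) := by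
    have hLh : L θhat - L θ₀ = L (θhat - θ₀) := (map_sub L θhat θ₀).symm
    rw [hLh]
    rcases le_or_gt (‖L (θhat - θ₀)‖ ^ 2) (2 * δ₀) with hc | hc
    · refine le_trans ?_ (le_max_left _ _)
      have := hseg 1 zero_le_one le_rfl
      nlinarith
    · rcases eq_or_lt_of_le hδnn with hδ0 | hδpos
      · have h4 : ‖L (θs - θ₀)‖ ^ 2 ≤ 0 := by rw [← hδ0] at hK; linarith
        have h5 : L (θs - θ₀) = 0 := by
          have : ‖L (θs - θ₀)‖ = 0 := by nlinarith [norm_nonneg (L (θs - θ₀))]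
          exact norm_eq_zero.mp this
        have h6 : θs = θ₀ := sub_eq_zero.mp (hLinj _ h5)
        have h7 := hdir1 h6
        rw [← h7, sub_self, inner_zero_right]
        exact le_trans (by linarith) (le_max_left _ _)
      · set s := Real.sqrt (2 * δ₀) with hs
        set n := ‖L (θhat - θ₀)‖ with hnn
        have hs2 : s ^ 2 = 2 * δ₀ := Real.sq_sqrt (by linarith)
        have hspos : 0 < s := Real.sqrt_pos.mpr (by linarith)
        have hn0 : (0:ℝ) ≤ n := norm_nonneg _
        have hnpos : 0 < n := by nlinarith [hn0]
        have hsn : s ≤ n := by nlinarith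
        have ht0 : 0 < s / n := div_pos hspos hnpos
        have ht1 : s / n ≤ 1 := (div_le_one hnpos).mpr hsn
        have h1 := hseg (s / n) ht0.le ht1
        have e1 : (s / n) ^ 2 * n ^ 2 = s ^ 2 := by field_simp
        refine le_trans ?_ (le_max_right _ _)
        have h2 : (s / n) * ⟪g, θ₀ - θhat⟫ ≤ s ^ 2 := by nlinarith
        rw [div_mul_eq_mul_div, div_le_iff₀ hnpos] at h2
        nlinarith
  refine ⟨⟨⟨hdir1, hdir2⟩, by linarith [sq_nonneg (‖L (θs - θ₀)‖)], by linarith [sq_nonneg (‖L (θs - θ₀)‖)],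
    ?_, hpart4⟩, ?_⟩
  · have h1 := aux_grad_le f hconv.convexOn hdiff θ₀ θhat
    have h3 : ⟪g, θhat - θ₀⟫ = -⟪g, θ₀ - θhat⟫ := by
      rw [show θhat - θ₀ = -(θ₀ - θhat) by abel, inner_neg_right]
    rw [← hg, h3] at h1
    linarith
  · intro c₀ hc₀ hC2 hbound hne
    set φ : ℝ → ℝ := fun u : ℝ => f ((1 - u) • θ₀ + u • θs) with hφdef
    set c : ℝ := c₀ * ‖θ₀ - θs‖ ^ 2 with hcdef
    have hsne : θs ≠ θ₀ := fun h => hne (hdir1 h)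
    have hsub : θ₀ - θs ≠ 0 := fun h => hsne (sub_eq_zero.mp h).symm
    have hnpos : 0 < ‖θ₀ - θs‖ := norm_pos_iff.mpr hsub
    have hcpos : 0 < c := by positivity
    have hδpos : 0 < δ₀ := by
      rcases eq_or_lt_of_le hδnn with h0 | h
      · exfalso
        have h4 : ‖L (θs - θ₀)‖ ^ 2 ≤ 0 := by rw [← h0] at hK; linarith
        have h5 : ‖L (θs - θ₀)‖ = 0 := by nlinarith [norm_nonneg (L (θs - θ₀))]
        exact hsne (sub_eq_zero.mp (hLinj _ (norm_eq_zero.mp h5)))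
      · exact h
    have hφeq : φ = fun u : ℝ => f (θ₀ + u • (θs - θ₀)) := by
      funext u
      show f ((1 - u) • θ₀ + u • θs) = f (θ₀ + u • (θs - θ₀))
      congr 1
      module
    have hφd : ∀ t : ℝ, HasDerivAt φ ⟪gradient f (θ₀ + t • (θs - θ₀)), θs - θ₀⟫ t := by
      rw [hφeq]; exact aux_line f hdiff θ₀ (θs - θ₀)
    have hline2 : ContDiff ℝ 2 (fun u : ℝ => (1 - u) • θ₀ + u • θs) :=
      (((contDiff_const.sub contDiff_id).smul contDiff_const).add
        (contDiff_id.smul contDiff_const))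
    have hφC2 : ContDiff ℝ 2 φ := hC2.comp hline2
    have h21 : (2 : WithTop ℕ∞) = 1 + 1 := by norm_num
    have hφsucc := (contDiff_succ_iff_deriv (f := φ)).mp (h21 ▸ hφC2)
    have hφdiff : Differentiable ℝ φ := hφsucc.1
    have hd1 : ContDiff ℝ 1 (deriv φ) := hφsucc.2.2
    have hφ'diff : Differentiable ℝ (deriv φ) := hd1.differentiable one_ne_zero
    have hφ'0 : deriv φ 0 = -δ₀ := by
      rw [(hφd 0).deriv, hδ₀, show θs - θ₀ = -(θ₀ - θs) by abel, inner_neg_right]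
      simp [hg]
    set ψ : ℝ → ℝ := fun t => φ 0 - δ₀ * t + c / 2 * t ^ 2 - φ t with hψdef
    set ψ' : ℝ → ℝ := fun t => -δ₀ + c * t - deriv φ t with hψ'def
    have hψd : ∀ t : ℝ, HasDerivAt ψ (ψ' t) t := by
      intro t
      have h1 : HasDerivAt (fun t : ℝ => φ 0 - δ₀ * t + c / 2 * t ^ 2) (-δ₀ + c * t) t := by
        have ha : HasDerivAt (fun t : ℝ => φ 0 - δ₀ * t) (-δ₀) t := by
          simpa using ((hasDerivAt_id t).const_mul δ₀).const_sub (φ 0)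
        have hb : HasDerivAt (fun t : ℝ => c / 2 * t ^ 2) (c / 2 * (2 * t)) t := by
          simpa using (hasDerivAt_pow 2 t).const_mul (c / 2)
        have := ha.add hb
        rw [show -δ₀ + c * t = -δ₀ + c / 2 * (2 * t) by ring]
        exact this
      exact h1.sub (hφdiff t).hasDerivAt
    have hψ'd : ∀ t : ℝ, HasDerivAt ψ' (c - deriv (deriv φ) t) t := by
      intro t
      have h1 : HasDerivAt (fun t : ℝ => -δ₀ + c * t) c t := by
        simpa using ((hasDerivAt_id t).const_mul c).const_add (-δ₀)
      exact h1.sub (hφ'diff t).hasDerivAt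
    have hψ'0 : ψ' 0 = 0 := by
      rw [hψ'def]; simp [hφ'0]
    have hψ'mono : MonotoneOn ψ' (Icc (0:ℝ) 1) := by
      apply monotoneOn_of_deriv_nonneg (convex_Icc 0 1)
      · exact Continuous.continuousOn (by
          exact (continuous_const.add (continuous_const.mul continuous_id)).sub hd1.continuous)
      · intro t _
        exact ((hψ'd t).differentiableAt).differentiableWithinAt
      · intro t ht
        rw [interior_Icc] at ht
        rw [(hψ'd t).deriv]
        have := hbound t ⟨ht.1.le, ht.2.le⟩
        linarith
    have hψ'nonneg : ∀ t ∈ Icc (0:ℝ) 1, 0 ≤ ψ' t := by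
      intro t ht
      have := hψ'mono (left_mem_Icc.mpr zero_le_one) ht ht.1
      rw [hψ'0] at this
      exact this
    have hψmono : MonotoneOn ψ (Icc (0:ℝ) 1) := by
      apply monotoneOn_of_deriv_nonneg (convex_Icc 0 1)
      · exact Continuous.continuousOn (by
          exact Differentiable.continuous (fun t => ((hψd t).differentiableAt)))
      · intro t _
        exact ((hψd t).differentiableAt).differentiableWithinAt
      · intro t ht
        rw [interior_Icc] at ht
        rw [(hψd t).deriv]
        exact hψ'nonneg t ⟨ht.1.le, ht.2.le⟩
    have hψ0 : ψ 0 = 0 := by rw [hψdef]; ring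
    have hφ0 : φ 0 = f θ₀ := by
      rw [hφdef]
      norm_num
    set tst : ℝ := min 1 (δ₀ / c) with htst
    have htpos : 0 < tst := lt_min one_pos (div_pos hδpos hcpos)
    have htle : tst ≤ 1 := min_le_left _ _
    have htmem : tst ∈ Icc (0:ℝ) 1 := ⟨htpos.le, htle⟩
    have hψt : 0 ≤ ψ tst := by
      have := hψmono (left_mem_Icc.mpr zero_le_one) htmem htpos.le
      rw [hψ0] at this
      exact this
    refine ⟨tst, htmem, ?_⟩
    have key : φ tst ≤ f θ₀ - δ₀ * tst + c / 2 * tst ^ 2 := by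
      rw [hψdef] at hψt
      simp only at hψt
      rw [hφ0] at hψt
      linarith
    have hgoal : δ₀ * tst - c / 2 * tst ^ 2 ≤ f θ₀ - φ tst := by linarith
    refine le_trans ?_ hgoal
    rcases le_total δ₀ c with hdc | hdc
    · have ht1 : δ₀ / c ≤ 1 := (div_le_one hcpos).mpr hdc
      have htval : tst = δ₀ / c := min_eq_right ht1
      have hmin : min δ₀ (δ₀ ^ 2 / c) = δ₀ ^ 2 / c := by
        apply min_eq_right
        rw [div_le_iff₀ hcpos]
        nlinarith
      rw [hmin, htval]
      field_simp
      norm_num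
    · have ht1 : 1 ≤ δ₀ / c := (one_le_div hcpos).mpr hdc
      have htval : tst = 1 := min_eq_left ht1
      have hmin : min δ₀ (δ₀ ^ 2 / c) ≤ δ₀ := min_le_left _ _
      rw [htval]
      nlinarith
end
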